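/- In a finite-horizon linear MDP with feature map φ satisfying ‖φ(s,a)‖₂ ≤ 1, reward parameter θ_h with ‖θ_h‖₂ ≤ 1, and transition measures ν_h with ‖ν_h(S)‖₂ ≤ √d, for any function V : S → [0, H] there exists w_h ∈ ℝ^d such that (T_h V)(s,a) = ⟨φ(s,a), w_h⟩ for all (s,a) and ‖w_h‖₂ ≤ 2H√d, where (T_h V)(s,a) = r_h(s,a) + ∫_S V(s') P_h(ds'|s,a). -/

import Mathlib

open MeasureTheory

/-- Euclidean (ℓ²) norm of a vector in `ℝ^d`. -/
noncomputable def vecNorm {d : ℕ} (v : Fin d → ℝ) : ℝ :=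
  Real.sqrt (∑ i, (v i) ^ 2)

lemma vecNorm_eq_norm {d : ℕ} (v : Fin d → ℝ) :
    vecNorm v = ‖(WithLp.equiv 2 (Fin d → ℝ)).symm v‖ := by
  rw [EuclideanSpace.norm_eq]
  simp [vecNorm, sq_abs]

lemma vecNorm_add_le {d : ℕ} (v w : Fin d → ℝ) :
    vecNorm (fun i => v i + w i) ≤ vecNorm v + vecNorm w := by
  rw [vecNorm_eq_norm, vecNorm_eq_norm, vecNorm_eq_norm]
  exact norm_add_le _ _

/-- In a linear MDP (at a fixed step `h`) with feature map `φ` bounded by 1,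
reward parameter `θ` bounded by 1, and transition measures `ν_i` with `‖ν(S)‖₂ ≤ √d`,
for any `V : S → [0, H]` there is `w ∈ ℝ^d` with
`(T V)(s,a) = r(s,a) + ∫ V dP(·|s,a) = ⟨φ(s,a), w⟩` and `‖w‖₂ ≤ 2H√d`.
Here the linear structure gives `r(s,a) = ⟨φ(s,a), θ⟩` and
`[P V](s,a) = ∑ i, φ(s,a)_i · ∫ V dν_i`. -/
theorem stmt3 {S A : Type*} [MeasurableSpace S] {d : ℕ} (hd : 1 ≤ d)
    (H : ℝ) (hH : 1 ≤ H)
    (φ : S → A → Fin d → ℝ) (hφ : ∀ s a, vecNorm (φ s a) ≤ 1)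
    (θ : Fin d → ℝ) (hθ : vecNorm θ ≤ 1)
    (ν : Fin d → Measure S) [∀ i, IsFiniteMeasure (ν i)]
    (hν : vecNorm (fun i => ((ν i) Set.univ).toReal) ≤ Real.sqrt d)
    (V : S → ℝ) (hVmeas : Measurable V) (hV0 : ∀ s, 0 ≤ V s) (hVH : ∀ s, V s ≤ H)
    (r : S → A → ℝ) (hr : ∀ s a, r s a = ∑ i, φ s a i * θ i)
    (PV : S → A → ℝ) (hPV : ∀ s a, PV s a = ∑ i, φ s a i * ∫ s', V s' ∂(ν i)) :
    ∃ w : Fin d → ℝ,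
      (∀ s a, r s a + PV s a = ∑ i, φ s a i * w i) ∧ vecNorm w ≤ 2 * H * Real.sqrt d := by
  set u : Fin d → ℝ := fun i => ∫ s', V s' ∂(ν i) with hu
  set t : Fin d → ℝ := fun i => ((ν i) Set.univ).toReal with ht
  have hH0 : (0:ℝ) ≤ H := le_trans zero_le_one hH
  -- bound on each integral
  have hui : ∀ i, 0 ≤ u i ∧ u i ≤ H * t i := by
    intro i
    constructor
    · exact integral_nonneg hV0
    · have : ∫ s', V s' ∂(ν i) ≤ ∫ _s', H ∂(ν i) := by
        apply integral_mono_of_nonneg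
        · exact Filter.Eventually.of_forall hV0
        · exact integrable_const H
        · exact Filter.Eventually.of_forall hVH
      simpa [ht, mul_comm, Measure.real] using this
  -- bound on vecNorm u
  have hnu : vecNorm u ≤ H * Real.sqrt d := by
    have h1 : ∑ i, (u i)^2 ≤ H^2 * ∑ i, (t i)^2 := by
      rw [Finset.mul_sum]
      apply Finset.sum_le_sum
      intro i _
      have h := hui i
      calc (u i)^2 ≤ (H * t i)^2 := by
            apply pow_le_pow_left₀ h.1 h.2
        _ = H^2 * (t i)^2 := by ring
    calc vecNorm u ≤ Real.sqrt (H^2 * ∑ i, (t i)^2) := Real.sqrt_le_sqrt h1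
      _ = H * Real.sqrt (∑ i, (t i)^2) := by
          rw [Real.sqrt_mul (sq_nonneg H), Real.sqrt_sq hH0]
      _ = H * vecNorm t := rfl
      _ ≤ H * Real.sqrt d := by
          apply mul_le_mul_of_nonneg_left _ hH0
          exact hν
  refine ⟨fun i => θ i + u i, ?_, ?_⟩
  · intro s a
    rw [hr, hPV]
    rw [← Finset.sum_add_distrib]
    apply Finset.sum_congr rfl
    intro i _
    ring
  · have hd1 : (1:ℝ) ≤ Real.sqrt d := by
      rw [show (1:ℝ) = Real.sqrt 1 by simp]
      apply Real.sqrt_le_sqrt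
      exact_mod_cast hd
    calc vecNorm (fun i => θ i + u i) ≤ vecNorm θ + vecNorm u := vecNorm_add_le θ u
      _ ≤ 1 + H * Real.sqrt d := add_le_add hθ hnu
      _ ≤ H * Real.sqrt d + H * Real.sqrt d := by
          apply add_le_add_left
          calc (1:ℝ) = 1 * 1 := by ring
            _ ≤ H * Real.sqrt d := mul_le_mul hH hd1 zero_le_one hH0
      _ = 2 * H * Real.sqrt d := by ring
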